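/- Let G be a simple graph on a finite vertex set of size n, ε ∈ (0,1), and C a nonempty clique such that every vertex u ∉ C satisfies |Γ(u) ∩ C| ≤ (1−ε)|C|. Let T be a natural number with T ≤ |C| and T ≥ (ln n)/ε. Then there exists a subset S ⊆ C with |S| = T such that C = {v : every s ∈ S with s ≠ v is adjacent to v}. -/

import Mathlib

open Finset

private def badSet {V : Type*} [Fintype V] [DecidableEq V] (G : SimpleGraph V)
    [DecidableRel G.Adj] (C S : Finset V) : Finset V :=
  Finset.univ.filter (fun u => u ∉ C ∧ ∀ s ∈ S, G.Adj s u)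

private lemma witness_aux {V : Type*} [Fintype V] [DecidableEq V]
    (G : SimpleGraph V) [DecidableRel G.Adj]
    (ε : ℝ) (hε0 : 0 < ε) (hε1 : ε < 1)
    (C : Finset V) (hCne : C.Nonempty)
    (hgap : ∀ u, u ∉ C → ((G.neighborFinset u ∩ C).card : ℝ) ≤ (1 - ε) * C.card)
    (T : ℕ) (hT1 : T ≤ C.card) :
    ∀ k, k ≤ T → ∃ S ⊆ C, S.card = k ∧
      ((badSet G C S).card : ℝ) ≤ (1 - ε)^k * ((Fintype.card V : ℝ) - 1) := by
  have hn1 : 1 ≤ Fintype.card V := Fintype.card_pos_iff.mpr ⟨hCne.choose⟩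
  have h1ε : (0:ℝ) < 1 - ε := by linarith
  intro k
  induction k with
  | zero =>
    intro _
    refine ⟨∅, empty_subset _, rfl, ?_⟩
    have : badSet G C ∅ ⊆ Finset.univ \ C := by
      intro u hu
      simp only [badSet, mem_filter] at hu
      simp [hu.2.1]
    calc ((badSet G C ∅).card : ℝ) ≤ ((Finset.univ \ C).card : ℝ) := by
          exact_mod_cast card_le_card this
      _ = (Fintype.card V : ℝ) - C.card := by
          rw [card_sdiff_of_subset (subset_univ _), card_univ]
          exact Nat.cast_sub (le_trans (card_le_univ C) (le_of_eq card_univ))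
      _ ≤ (1 - ε)^0 * ((Fintype.card V : ℝ) - 1) := by
          have : (1:ℝ) ≤ C.card := by exact_mod_cast card_pos.mpr hCne
          simp; linarith
  | succ k ih =>
    intro hk
    obtain ⟨S, hSC, hScard, hSbad⟩ := ih (Nat.le_of_succ_le hk)
    set B := badSet G C S with hB
    by_cases hBne : B.Nonempty
    · -- averaging: some s ∈ C is non-adjacent to ≥ ε|B| elements of B
      have hcount : ∀ u ∈ B, ε * C.card ≤ ((C.filter (fun s => ¬ G.Adj s u)).card : ℝ) := by
        intro u hu
        have huC : u ∉ C := by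
          simp only [hB, badSet, mem_filter] at hu; exact hu.2.1
        have hsplit := Finset.card_filter_add_card_filter_not
          (s := C) (p := fun s => G.Adj s u)
        have heq : C.filter (fun s => G.Adj s u) = G.neighborFinset u ∩ C := by
          ext s; simp [SimpleGraph.adj_comm, and_comm]
        have hg := hgap u huC
        rw [heq] at hsplit
        have : ((C.filter (fun s => ¬ G.Adj s u)).card : ℝ)
            = (C.card : ℝ) - ((G.neighborFinset u ∩ C).card : ℝ) := by
          have := hsplit
          push_cast [← this]
          ring
        rw [this]; nlinarith
      have hsum : ε * C.card * B.card ≤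
          ∑ s ∈ C, ((B.filter (fun u => ¬ G.Adj s u)).card : ℝ) := by
        have swap : ∑ s ∈ C, ((B.filter (fun u => ¬ G.Adj s u)).card : ℝ)
            = ∑ u ∈ B, ((C.filter (fun s => ¬ G.Adj s u)).card : ℝ) := by
          simp only [Finset.card_filter]
          push_cast
          rw [Finset.sum_comm]
        rw [swap]
        calc ε * C.card * B.card = ∑ _u ∈ B, ε * C.card := by
              rw [Finset.sum_const]; push_cast; ring
          _ ≤ _ := Finset.sum_le_sum hcount
      obtain ⟨s, hsC, hs⟩ : ∃ s ∈ C, ε * B.card ≤ ((B.filter (fun u => ¬ G.Adj s u)).card : ℝ) := by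
        by_contra h
        push_neg at h
        have := Finset.sum_lt_sum_of_nonempty hCne h
        rw [Finset.sum_const, nsmul_eq_mul] at this
        have hc : (0:ℝ) < C.card := by exact_mod_cast card_pos.mpr hCne
        nlinarith [hsum, this]
      have hBpos : (0:ℝ) < B.card := by exact_mod_cast card_pos.mpr hBne
      have hfpos : (0:ℝ) < ((B.filter (fun u => ¬ G.Adj s u)).card : ℝ) := by nlinarith
      obtain ⟨u, hu⟩ : (B.filter (fun u => ¬ G.Adj s u)).Nonempty := by
        rw [← card_pos]; exact_mod_cast hfpos
      have hsS : s ∉ S := by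
        intro hsS
        have := (mem_filter.mp hu)
        have huB := this.1
        simp only [hB, badSet, mem_filter] at huB
        exact this.2 (huB.2.2 s hsS)
      refine ⟨insert s S, insert_subset hsC hSC, by rw [card_insert_of_notMem hsS, hScard], ?_⟩
      have hbadins : badSet G C (insert s S) = B.filter (fun u => G.Adj s u) := by
        ext u
        simp only [badSet, hB, mem_filter, mem_univ, true_and, mem_insert]
        constructor
        · rintro ⟨h1, h2⟩
          exact ⟨⟨h1, fun t ht => h2 t (Or.inr ht)⟩, h2 s (Or.inl rfl)⟩
        · rintro ⟨⟨h1, h2⟩, h3⟩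
          exact ⟨h1, fun t ht => ht.elim (fun e => e ▸ h3) (h2 t)⟩
      rw [hbadins]
      have hsplitB := Finset.card_filter_add_card_filter_not
        (s := B) (p := fun u => G.Adj s u)
      have : ((B.filter (fun u => G.Adj s u)).card : ℝ)
          = (B.card : ℝ) - ((B.filter (fun u => ¬ G.Adj s u)).card : ℝ) := by
        push_cast [← hsplitB]; ring
      rw [this]
      calc (B.card : ℝ) - ((B.filter (fun u => ¬ G.Adj s u)).card : ℝ)
          ≤ (1 - ε) * B.card := by nlinarith
        _ ≤ (1 - ε) * ((1 - ε)^k * ((Fintype.card V : ℝ) - 1)) := by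
            apply mul_le_mul_of_nonneg_left hSbad (le_of_lt h1ε)
        _ = (1 - ε)^(k+1) * ((Fintype.card V : ℝ) - 1) := by ring
    · -- bad set empty: extend arbitrarily
      have hlt : S.card < C.card := by omega
      obtain ⟨s, hsC, hsS⟩ := Finset.exists_of_ssubset
        (hSC.ssubset_of_ne (fun e => by rw [e] at hScard; omega))
      refine ⟨insert s S, insert_subset hsC hSC, by rw [card_insert_of_notMem hsS, hScard], ?_⟩
      have : badSet G C (insert s S) ⊆ B := by
        intro u hu
        simp only [badSet, hB, mem_filter] at hu ⊢
        exact ⟨hu.1, hu.2.1, fun t ht => hu.2.2 t (mem_insert_of_mem ht)⟩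
      have hempty : badSet G C (insert s S) = ∅ := by
        rw [not_nonempty_iff_eq_empty] at hBne
        exact Finset.subset_empty.mp (hBne ▸ this)
      rw [hempty]
      simp only [card_empty, Nat.cast_zero]
      have hnn : (0:ℝ) ≤ (Fintype.card V : ℝ) - 1 := by
        have : (1:ℝ) ≤ (Fintype.card V : ℝ) := by exact_mod_cast hn1
        linarith
      exact mul_nonneg (pow_nonneg (le_of_lt h1ε) _) hnn

theorem clique_identified_by_witness {V : Type*} [Fintype V] [DecidableEq V]
    (G : SimpleGraph V) [DecidableRel G.Adj]
    (ε : ℝ) (hε0 : 0 < ε) (hε1 : ε < 1)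
    (C : Finset V) (hCne : C.Nonempty)
    (hclique : ∀ x ∈ C, ∀ y ∈ C, x ≠ y → G.Adj x y)
    (hgap : ∀ u, u ∉ C → ((G.neighborFinset u ∩ C).card : ℝ) ≤ (1 - ε) * C.card)
    (T : ℕ) (hT1 : T ≤ C.card)
    (hT2 : Real.log (Fintype.card V) / ε ≤ (T : ℝ)) :
    ∃ S ⊆ C, S.card = T ∧
      C = Finset.univ.filter (fun v => ∀ s ∈ S, s ≠ v → G.Adj s v) := by
  obtain ⟨S, hSC, hScard, hSbad⟩ := witness_aux G ε hε0 hε1 C hCne hgap T hT1 T le_rfl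
  refine ⟨S, hSC, hScard, ?_⟩
  set n := Fintype.card V with hn
  have hn1 : 1 ≤ n := Fintype.card_pos_iff.mpr ⟨hCne.choose⟩
  have hnR : (1:ℝ) ≤ n := by exact_mod_cast hn1
  -- (1-ε)^T ≤ exp(-ε T) ≤ 1/n
  have hlog : Real.log n ≤ ε * T := by
    rw [div_le_iff₀ hε0] at hT2; linarith
  have hexp : (n:ℝ) ≤ Real.exp (ε * T) := by
    calc (n:ℝ) = Real.exp (Real.log n) := (Real.exp_log (by linarith)).symm
      _ ≤ Real.exp (ε * T) := Real.exp_le_exp.mpr hlog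
  have hpow : (1 - ε)^T ≤ Real.exp (-(ε * T)) := by
    rw [show -(ε * (T:ℝ)) = (T:ℕ) • (-ε) by push_cast; ring, Real.exp_nsmul]
    apply pow_le_pow_left₀ (by linarith)
    linarith [Real.add_one_le_exp (-ε)]
  have hinv : Real.exp (-(ε * T)) ≤ 1 / n := by
    rw [Real.exp_neg, ← one_div]
    exact one_div_le_one_div_of_le (by linarith) hexp
  have hfinal : ((badSet G C S).card : ℝ) < 1 := by
    calc ((badSet G C S).card : ℝ) ≤ (1 - ε)^T * ((n:ℝ) - 1) := hSbad
      _ ≤ (1/n) * ((n:ℝ) - 1) := by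
          apply mul_le_mul_of_nonneg_right (hpow.trans hinv) (by linarith)
      _ < 1 := by
          rw [one_div, inv_mul_lt_iff₀ (by linarith)]
          linarith
  have hbadempty : badSet G C S = ∅ := by
    rw [← Finset.card_eq_zero]
    by_contra h
    have : 1 ≤ (badSet G C S).card := Nat.one_le_iff_ne_zero.mpr h
    have : (1:ℝ) ≤ ((badSet G C S).card : ℝ) := by exact_mod_cast this
    linarith
  ext v
  simp only [mem_filter, mem_univ, true_and]
  constructor
  · intro hv s hsS hne
    exact hclique s (hSC hsS) v hv hne
  · intro hv
    by_contra hvC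
    have : v ∈ badSet G C S := by
      simp only [badSet, mem_filter, mem_univ, true_and]
      exact ⟨hvC, fun s hs => hv s hs (fun e => hvC (e ▸ hSC hs))⟩
    rw [hbadempty] at this
    exact absurd this (notMem_empty v)
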